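/- Let σ be a sequence of m requests over n keys, w_i the total count of key i in σ, and w_i(t) the count of key i among the first t requests. Then Σ_{t=1}^m log₂(t/w_{σ_t}(t)) ≤ m·H(W̄) + 2m, where W̄ = (w_1/m, ..., w_n/m) and H is binary entropy. -/

import Mathlib

open Finset

lemma aux_log_sum_lower (c : ℕ) : (c:ℝ) * Real.log c - c ≤ ∑ k ∈ Finset.Icc 1 c, Real.log k := by
  induction c with
  | zero => simp
  | succ c ih =>
    rw [Finset.sum_Icc_succ_top (by omega)]
    have key : (c:ℝ) * Real.log (c+1) - (c:ℝ) * Real.log c ≤ 1 := by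
      rcases Nat.eq_zero_or_pos c with h | h
      · subst h; simp
      · have hc : (0:ℝ) < c := by exact_mod_cast h
        have h1 : Real.log ((c+1)/c) ≤ (c+1)/c - 1 :=
          Real.log_le_sub_one_of_pos (by positivity)
        rw [Real.log_div (by positivity) (by positivity)] at h1
        have h3 := mul_le_mul_of_nonneg_left h1 hc.le
        have h4 : (c:ℝ) * ((↑c + 1) / ↑c - 1) = 1 := by field_simp; ring
        nlinarith [h3]
    push_cast
    nlinarith [ih]

lemma aux_logb_sum_lower (c : ℕ) :
    (c:ℝ) * Real.logb 2 c - 2*c ≤ ∑ k ∈ Finset.Icc 1 c, Real.logb 2 k := by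
  have h2 : (0:ℝ) < Real.log 2 := Real.log_pos (by norm_num)
  have h2' : (1:ℝ)/2 ≤ Real.log 2 := by
    have := Real.log_two_gt_d9; linarith
  have h := aux_log_sum_lower c
  have key : ∑ k ∈ Finset.Icc 1 c, Real.logb 2 k
      = (∑ k ∈ Finset.Icc 1 c, Real.log k) / Real.log 2 := by
    rw [Finset.sum_div]; rfl
  rw [key, Real.logb]
  have step1 : (c:ℝ)*(Real.log c/Real.log 2) - 2*c ≤ ((c:ℝ)*Real.log c - c)/Real.log 2 := by
    rw [sub_div, mul_div_assoc]
    have : (c:ℝ)/Real.log 2 ≤ 2*c := by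
      rw [div_le_iff₀ h2]
      have : (0:ℝ) ≤ c := Nat.cast_nonneg c
      nlinarith
    linarith
  refine step1.trans ?_
  gcongr

lemma aux_logb_sum_upper (m : ℕ) :
    ∑ k ∈ Finset.Icc 1 m, Real.logb 2 k ≤ (m:ℝ) * Real.logb 2 m := by
  calc ∑ k ∈ Finset.Icc 1 m, Real.logb 2 k ≤ ∑ _k ∈ Finset.Icc 1 m, Real.logb 2 m := by
        apply Finset.sum_le_sum
        intro k hk
        simp only [Finset.mem_Icc] at hk
        have hk1 : (0:ℝ) < k := by exact_mod_cast Nat.lt_of_lt_of_le Nat.zero_lt_one hk.1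
        exact Real.logb_le_logb_of_le (by norm_num) hk1 (by exact_mod_cast hk.2)
    _ = (m:ℝ) * Real.logb 2 m := by
        rw [Finset.sum_const, Nat.card_Icc]
        simp

/-- Total online log-loss against empirical frequencies is at most
    `m·H(W̄) + 2m`, where request `s` occurs at time `t = s + 1`. -/
theorem online_logloss_entropy_bound (n m : ℕ) (hm : 0 < m)
    (σ : Fin m → Fin n)
    (w : Fin n → ℕ → ℕ)
    (hw : ∀ i t, w i t = (Finset.univ.filter fun s : Fin m => (s : ℕ) < t ∧ σ s = i).card) :
    ∑ s : Fin m, Real.logb 2 (((s : ℕ) + 1 : ℝ) / (w (σ s) ((s : ℕ) + 1) : ℝ)) ≤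
      (m : ℝ) * (∑ i ∈ Finset.univ.filter fun i : Fin n => 0 < w i m,
          ((w i m : ℝ) / m) * Real.logb 2 ((m : ℝ) / (w i m : ℝ))) + 2 * m := by
  classical
  -- basic facts about the counters
  have hfiber_card : ∀ i, (Finset.univ.filter fun s : Fin m => σ s = i).card = w i m := by
    intro i
    rw [hw]
    congr 1
    apply Finset.filter_congr
    intro s _
    simp [s.isLt]
  have hwpos : ∀ (i) (s : Fin m), σ s = i → 1 ≤ w i ((s:ℕ)+1) := by
    intro i s hs
    rw [hw]
    refine Finset.card_pos.mpr ⟨s, ?_⟩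
    simp [hs]
  have hwle : ∀ (i) (s : Fin m), w i ((s:ℕ)+1) ≤ w i m := by
    intro i s
    rw [hw, hw]
    apply Finset.card_le_card
    intro x hx
    simp only [Finset.mem_filter, Finset.mem_univ, true_and] at *
    exact ⟨x.isLt, hx.2⟩
  have hmono : ∀ (i) (s t : Fin m), σ s = i → σ t = i → s < t →
      w i ((s:ℕ)+1) < w i ((t:ℕ)+1) := by
    intro i s t hs ht hst
    rw [hw, hw]
    apply Finset.card_lt_card
    constructor
    · intro x hx
      simp only [Finset.mem_filter, Finset.mem_univ, true_and] at *
      exact ⟨by have : (s:ℕ) < t := hst; omega, hx.2⟩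
    · intro hsub
      have := hsub (by simp [ht] :
        t ∈ Finset.univ.filter fun x : Fin m => (x:ℕ) < (t:ℕ)+1 ∧ σ x = i)
      simp only [Finset.mem_filter, Finset.mem_univ, true_and] at this
      have h1 : (t:ℕ) < (s:ℕ)+1 := this.1
      have h2 : (s:ℕ) < (t:ℕ) := hst
      omega
  have hinj : ∀ i, Set.InjOn (fun s : Fin m => w i ((s:ℕ)+1))
      (Finset.univ.filter fun s : Fin m => σ s = i) := by
    intro i s hs t ht hwst
    simp only [Finset.coe_filter, Set.mem_setOf_eq, Finset.mem_univ, true_and] at hs ht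
    by_contra hne
    rcases lt_or_gt_of_ne (fun h => hne h) with h | h
    · exact absurd hwst (Nat.ne_of_lt (hmono i s t hs ht h))
    · exact absurd hwst.symm (Nat.ne_of_lt (hmono i t s ht hs h))
  have himage : ∀ i, Finset.image (fun s : Fin m => w i ((s:ℕ)+1))
      (Finset.univ.filter fun s : Fin m => σ s = i) = Finset.Icc 1 (w i m) := by
    intro i
    apply Finset.eq_of_subset_of_card_le
    · intro k hk
      simp only [Finset.mem_image] at hk
      obtain ⟨s, hs, rfl⟩ := hk
      simp only [Finset.mem_filter, Finset.mem_univ, true_and] at hs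
      exact Finset.mem_Icc.mpr ⟨hwpos i s hs, hwle i s⟩
    · rw [Nat.card_Icc, Finset.card_image_of_injOn (hinj i), hfiber_card]
      omega
  -- split the logarithm of the quotient
  have hsplit : ∀ s : Fin m,
      Real.logb 2 (((s:ℕ)+1 : ℝ) / (w (σ s) ((s:ℕ)+1) : ℝ))
        = Real.logb 2 (((s:ℕ):ℝ)+1) - Real.logb 2 ((w (σ s) ((s:ℕ)+1) : ℕ) : ℝ) := by
    intro s
    have hd : ((w (σ s) ((s:ℕ)+1) : ℕ) : ℝ) ≠ 0 := by
      have := hwpos (σ s) s rfl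
      exact_mod_cast Nat.cast_ne_zero.mpr (by omega)
    rw [Real.logb_div (by positivity) hd]
  -- value of the first sum
  have hA : ∑ s : Fin m, Real.logb 2 (((s:ℕ):ℝ)+1)
      = ∑ k ∈ Finset.Icc 1 m, Real.logb 2 (k:ℝ) := by
    rw [← Finset.Ico_add_one_right_eq_Icc, Finset.sum_Ico_eq_sum_range]
    rw [Fin.sum_univ_eq_sum_range (fun k => Real.logb 2 ((k:ℝ)+1)) m]
    apply Finset.sum_congr (by norm_num)
    intro k _
    push_cast
    ring_nf
  -- value of the second sum
  have hB : ∑ s : Fin m, Real.logb 2 ((w (σ s) ((s:ℕ)+1) : ℕ) : ℝ)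
      = ∑ i : Fin n, ∑ k ∈ Finset.Icc 1 (w i m), Real.logb 2 (k:ℝ) := by
    rw [← Finset.sum_fiberwise_of_maps_to (g := σ) (t := Finset.univ)
      (fun s _ => Finset.mem_univ (σ s))
      (fun s : Fin m => Real.logb 2 ((w (σ s) ((s:ℕ)+1) : ℕ) : ℝ))]
    apply Finset.sum_congr rfl
    intro i _
    have step : ∑ s ∈ (Finset.univ.filter fun s : Fin m => σ s = i),
        Real.logb 2 ((w (σ s) ((s:ℕ)+1) : ℕ) : ℝ)
        = ∑ s ∈ (Finset.univ.filter fun s : Fin m => σ s = i),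
        Real.logb 2 ((w i ((s:ℕ)+1) : ℕ) : ℝ) := by
      apply Finset.sum_congr rfl
      intro s hs
      simp only [Finset.mem_filter, Finset.mem_univ, true_and] at hs
      rw [hs]
    rw [step, ← himage i, Finset.sum_image]
    intro x hx y hy hxy
    exact hinj i (by simpa using hx) (by simpa using hy) hxy
  -- total mass
  have hsum : ∑ i : Fin n, ((w i m : ℕ) : ℝ) = (m:ℝ) := by
    have h1 : (Finset.univ : Finset (Fin m)).card
        = ∑ i : Fin n, (Finset.univ.filter fun s : Fin m => σ s = i).card :=
      Finset.card_eq_sum_card_fiberwise (fun s _ => Finset.mem_univ (σ s))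
    have h2 : m = ∑ i : Fin n, w i m := by
      simpa [hfiber_card] using h1
    exact_mod_cast h2.symm
  have hmne : (m:ℝ) ≠ 0 := by positivity
  -- rewrite the RHS
  have hRHS : (m : ℝ) * (∑ i ∈ Finset.univ.filter fun i : Fin n => 0 < w i m,
          ((w i m : ℝ) / m) * Real.logb 2 ((m : ℝ) / (w i m : ℝ)))
      = ∑ i : Fin n, ((w i m : ℝ) * Real.logb 2 (m:ℝ) - (w i m : ℝ) * Real.logb 2 ((w i m : ℕ) : ℝ)) := by
    rw [Finset.mul_sum]
    rw [Finset.sum_filter_of_ne (f := fun i : Fin n =>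
      (m:ℝ) * (((w i m : ℝ) / m) * Real.logb 2 ((m : ℝ) / (w i m : ℝ))))
      (fun i _ hne => by
        by_contra hle
        have : w i m = 0 := by omega
        simp [this] at hne)]
    apply Finset.sum_congr rfl
    intro i _
    rcases Nat.eq_zero_or_pos (w i m) with h | h
    · simp [h]
    · have h0 : ((w i m : ℕ) : ℝ) ≠ 0 := by
        exact_mod_cast Nat.cast_ne_zero.mpr h.ne'
      rw [Real.logb_div hmne h0]
      field_simp
  -- put it together
  calc ∑ s : Fin m, Real.logb 2 (((s : ℕ) + 1 : ℝ) / (w (σ s) ((s : ℕ) + 1) : ℝ))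
      = (∑ s : Fin m, Real.logb 2 (((s:ℕ):ℝ)+1))
        - ∑ s : Fin m, Real.logb 2 ((w (σ s) ((s:ℕ)+1) : ℕ) : ℝ) := by
        rw [← Finset.sum_sub_distrib]
        exact Finset.sum_congr rfl fun s _ => hsplit s
    _ ≤ (m:ℝ) * Real.logb 2 (m:ℝ)
        - ∑ i : Fin n, ((w i m : ℝ) * Real.logb 2 ((w i m : ℕ) : ℝ) - 2*(w i m : ℝ)) := by
        apply sub_le_sub
        · rw [hA]; exact aux_logb_sum_upper m
        · rw [hB]
          exact Finset.sum_le_sum fun i _ => aux_logb_sum_lower (w i m)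
    _ = ∑ i : Fin n, ((w i m : ℝ) * Real.logb 2 (m:ℝ) - (w i m : ℝ) * Real.logb 2 ((w i m : ℕ) : ℝ))
        + 2 * m := by
        rw [Finset.sum_sub_distrib, Finset.sum_sub_distrib, ← Finset.sum_mul,
          ← Finset.mul_sum, hsum]
        ring
    _ = (m : ℝ) * (∑ i ∈ Finset.univ.filter fun i : Fin n => 0 < w i m,
          ((w i m : ℝ) / m) * Real.logb 2 ((m : ℝ) / (w i m : ℝ))) + 2 * m := by
        rw [hRHS]
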